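/- arXiv:1208.0316 — 6 statements merged into one kernel-verified Lean document; each statement's English description precedes it below -/
import Mathlib

section
/- Suppose q : [0,∞) → ℝ is differentiable and satisfies q'(t) = ρ(s(t)) - f(q(t)), where ρ : ℝ≥0 → ℝ≥0 is continuous, increasing, bounded with supremum ρᵐ > 0, f is continuous strictly increasing on (Q⁰, ∞), s(t) ≤ Mᵐ for all t with ρ(Mᵐ) < ρᵐ, and Qᵐ := f⁻¹(ρᵐ). If q(0) > Qᵐ, then there is a finite time t₁ ≥ 0 such that q(t) < Qᵐ for all t ≥ t₁. -/
theorem quota_upper_bound (ρ f : ℝ → ℝ) (s q : ℝ → ℝ) (ρm Mm Q0 Qm : ℝ)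
    (hρcont : Continuous ρ) (hρmono : Monotone ρ)
    (hρbdd : ∀ x ≥ (0:ℝ), ρ x ≤ ρm) (hρm : 0 < ρm)
    (hfmono : StrictMonoOn f (Set.Ioi Q0)) (hfcont : ContinuousOn f (Set.Ioi Q0))
    (hQm : Qm ∈ Set.Ioi Q0) (hfQm : f Qm = ρm)
    (hs : ∀ t ≥ (0:ℝ), 0 ≤ s t ∧ s t ≤ Mm)
    (hMm : ρ Mm < ρm)
    (hq : Differentiable ℝ q)
    (hode : ∀ t ≥ (0:ℝ), deriv q t = ρ (s t) - f (q t))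
    (hq0 : q 0 > Qm) :
    ∃ t₁ ≥ (0:ℝ), ∀ t ≥ t₁, q t < Qm := by
  set δ := ρm - ρ Mm with hδdef
  have hδ : 0 < δ := by simp only [hδdef]; linarith
  have hQ0 : Q0 < Qm := hQm
  -- key derivative bound
  have hderiv : ∀ t ≥ (0:ℝ), Qm ≤ q t → deriv q t ≤ -δ := by
    intro t ht hqt
    rw [hode t ht]
    have h1 : ρ (s t) ≤ ρ Mm := hρmono (hs t ht).2
    have h2 : ρm ≤ f (q t) := by
      rcases eq_or_lt_of_le hqt with h | h
      · rw [← h, hfQm]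
      · exact le_of_lt (hfQm ▸ hfmono hQm (lt_trans hQ0 h) h)
    simp only [hδdef]; linarith
  -- invariance
  have hinv : ∀ t₁ ≥ (0:ℝ), q t₁ < Qm → ∀ t ≥ t₁, q t < Qm := by
    intro t₁ ht₁ hqt₁ t ht
    by_contra hle
    push_neg at hle
    set K := {u | u ∈ Set.Icc t₁ t ∧ Qm ≤ q u} with hK
    have hKne : K.Nonempty := ⟨t, ⟨ht, le_refl t⟩, hle⟩
    have hKclosed : IsClosed K :=
      (isClosed_Icc.inter (isClosed_le continuous_const hq.continuous) :
        IsClosed (Set.Icc t₁ t ∩ {u | Qm ≤ q u}))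
    have hKbdd : BddBelow K := ⟨t₁, fun u hu => hu.1.1⟩
    set c := sInf K with hc
    have hcK : c ∈ K := hKclosed.csInf_mem hKne hKbdd
    have hct₁ : t₁ < c := by
      rcases lt_or_eq_of_le hcK.1.1 with h | h
      · exact h
      · exfalso; rw [← h] at hcK; exact absurd hcK.2 (not_le.mpr hqt₁)
    have hbelow : ∀ u ∈ Set.Ioo t₁ c, q u < Qm := by
      intro u hu
      by_contra hge
      push_neg at hge
      have huK : u ∈ K := ⟨⟨le_of_lt hu.1, le_trans (le_of_lt hu.2) hcK.1.2⟩, hge⟩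
      exact absurd (csInf_le hKbdd huK) (not_le.mpr hu.2)
    -- derivative at c is nonnegative (left slopes are positive)
    have hd : HasDerivAt q (deriv q c) c := (hq c).hasDerivAt
    have hslope : Filter.Tendsto (slope q c) (nhdsWithin c (Set.Iio c)) (nhds (deriv q c)) :=
      (hasDerivAt_iff_tendsto_slope.mp hd).mono_left
        (nhdsWithin_mono c (fun x hx => ne_of_lt hx))
    have hmem : Set.Ioo t₁ c ∈ nhdsWithin c (Set.Iio c) :=
      Ioo_mem_nhdsLT_of_mem ⟨hct₁, le_refl c⟩
    have hge0 : 0 ≤ deriv q c := by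
      refine ge_of_tendsto hslope (Filter.eventually_of_mem hmem ?_)
      intro u hu
      have h1 : q u - q c < 0 := by have := hbelow u hu; linarith [hcK.2]
      have h2 : u - c < 0 := by linarith [hu.2]
      have h3 : 0 < (q u - q c) / (u - c) := div_pos_of_neg_of_neg h1 h2
      rw [slope_def_field]
      exact le_of_lt h3
    have hc0 : (0:ℝ) ≤ c := le_trans ht₁ (le_of_lt hct₁)
    have := hderiv c hc0 hcK.2
    linarith
  -- find a time where q drops below Qm
  set N := (q 0 - Qm) / δ + 1 with hNdef
  have hN0 : (0:ℝ) ≤ N := by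
    have : 0 ≤ (q 0 - Qm) / δ := div_nonneg (by linarith) (le_of_lt hδ)
    simp only [hNdef]; linarith
  by_cases hcase : ∃ u ∈ Set.Icc (0:ℝ) N, q u < Qm
  · obtain ⟨u, hu, hqu⟩ := hcase
    exact ⟨u, hu.1, hinv u hu.1 hqu⟩
  · exfalso
    push_neg at hcase
    have hmvt : q N - q 0 ≤ -δ * (N - 0) := by
      refine (convex_Icc (0:ℝ) N).image_sub_le_mul_sub_of_deriv_le
        hq.continuous.continuousOn hq.differentiableOn ?_ 0 ⟨le_refl 0, hN0⟩ N ⟨hN0, le_refl N⟩ hN0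
      intro x hx
      rw [interior_Icc] at hx
      exact hderiv x (le_of_lt hx.1) (hcase x ⟨le_of_lt hx.1, le_of_lt hx.2⟩)
    have hδN : δ * N = (q 0 - Qm) + δ := by
      rw [hNdef, mul_add, mul_one, mul_div_cancel₀ _ (ne_of_gt hδ)]
    have hqN : Qm ≤ q N := hcase N ⟨hN0, le_refl N⟩
    nlinarith
end

section
/- Let φ : [0, s_in] → ℝ be continuous and strictly decreasing with φ(0) = D·s_in > 0 and φ(s_in) < 0. Then there exists a unique ŝ ∈ (0, s_in) with φ(ŝ) = D·s_in/2, and for any differentiable s : [0,∞) → [0, s_in] satisfying s'(t) ≥ φ(s(t)) for all t: (i) the set {t : s(t) ≥ ŝ} is forward invariant (if s(t₀) ≥ ŝ then s(t) ≥ ŝ for all t ≥ t₀), and (ii) there exists a finite time t₀ such that s(t₀) ≥ ŝ. -/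
theorem substrate_lower_bound (φ : ℝ → ℝ) (D sin : ℝ) (hD : 0 < D) (hsin : 0 < sin)
    (hcont : ContinuousOn φ (Set.Icc 0 sin))
    (hanti : StrictAntiOn φ (Set.Icc 0 sin))
    (hφ0 : φ 0 = D * sin)
    (hφsin : φ sin < 0) :
    ∃ shat ∈ Set.Ioo 0 sin, φ shat = D * sin / 2 ∧
      (∀ s' ∈ Set.Ioo 0 sin, φ s' = D * sin / 2 → s' = shat) ∧
      ∀ s : ℝ → ℝ, Differentiable ℝ s → (∀ t ≥ (0:ℝ), s t ∈ Set.Icc 0 sin) →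
        (∀ t ≥ (0:ℝ), deriv s t ≥ φ (s t)) →
        ((∀ t₀ ≥ (0:ℝ), s t₀ ≥ shat → ∀ t ≥ t₀, s t ≥ shat) ∧
         ∃ t₀ ≥ (0:ℝ), s t₀ ≥ shat) := by
  set c := D * sin / 2 with hc
  have hcpos : 0 < c := by positivity
  have hclt : c < D * sin := by rw [hc]; nlinarith
  have hmem : c ∈ Set.Icc (φ sin) (φ 0) := by
    constructor
    · linarith
    · rw [hφ0]; linarith
  obtain ⟨shat, hshatIcc, hφshat⟩ := intermediate_value_Icc' hsin.le hcont hmem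
  have hne0 : shat ≠ 0 := by
    rintro rfl; rw [hφ0] at hφshat; linarith
  have hnesin : shat ≠ sin := by
    rintro rfl; linarith [hφshat]
  have hIoo : shat ∈ Set.Ioo 0 sin :=
    ⟨lt_of_le_of_ne hshatIcc.1 (Ne.symm hne0), lt_of_le_of_ne hshatIcc.2 hnesin⟩
  refine ⟨shat, hIoo, hφshat, ?_, ?_⟩
  · intro s' hs' hφs'
    exact hanti.injOn (Set.Ioo_subset_Icc_self hs') hshatIcc (by rw [hφs', hφshat])
  intro s hdiff hrange hder
  have hscont : Continuous s := hdiff.continuous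
  have key : ∀ u ≥ (0:ℝ), s u < shat → c ≤ deriv s u := by
    intro u hu hlt
    have h1 : φ shat < φ (s u) := hanti (hrange u hu) hshatIcc hlt
    have h2 := hder u hu
    rw [hφshat] at h1
    linarith
  constructor
  · intro t₀ ht₀ hst₀ t ht
    by_contra hlt
    push_neg at hlt
    set A := Set.Icc t₀ t ∩ {u | shat ≤ s u} with hA
    have hAne : A.Nonempty := ⟨t₀, ⟨le_refl _, ht⟩, hst₀⟩
    have hAclosed : IsClosed A :=
      isClosed_Icc.inter (isClosed_le continuous_const hscont)
    have hAbdd : BddAbove A := ⟨t, fun u hu => hu.1.2⟩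
    have hT : sSup A ∈ A := hAclosed.csSup_mem hAne hAbdd
    obtain ⟨⟨hT1, hTt⟩, hTs⟩ := hT
    have hTs' : shat ≤ s (sSup A) := hTs
    have hTlt : sSup A < t := lt_of_le_of_ne hTt (fun h => by rw [h] at hTs'; linarith)
    have hb : ∀ u ∈ Set.Ioo (sSup A) t, s u < shat := by
      intro u hu
      by_contra hge
      push_neg at hge
      have hmemA : u ∈ A := ⟨⟨le_trans hT1 hu.1.le, hu.2.le⟩, hge⟩
      have := le_csSup hAbdd hmemA
      linarith [hu.1]
    have hmono : MonotoneOn s (Set.Icc (sSup A) t) := by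
      apply monotoneOn_of_deriv_nonneg (convex_Icc (sSup A) t) hscont.continuousOn
        (hdiff.differentiableOn.mono interior_subset)
      intro u hu
      rw [interior_Icc] at hu
      have hu0 : (0:ℝ) ≤ u := le_trans (le_trans ht₀ hT1) hu.1.le
      have := key u hu0 (hb u hu)
      linarith
    have : s (sSup A) ≤ s t :=
      hmono ⟨le_refl _, hTt⟩ ⟨hTt, le_refl _⟩ hTt
    linarith
  · by_contra hno
    push_neg at hno
    set T := (sin + 1) / c with hT
    have hTpos : 0 < T := by positivity
    have hd2 : Differentiable ℝ (fun u : ℝ => s u - c * u) := by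
      apply hdiff.sub
      exact (differentiable_id.const_mul c)
    have hmono : MonotoneOn (fun u => s u - c * u) (Set.Icc 0 T) := by
      apply monotoneOn_of_deriv_nonneg (convex_Icc 0 T)
        hd2.continuous.continuousOn
        (hd2.differentiableOn.mono interior_subset)
      intro u hu
      rw [interior_Icc] at hu
      have hder2 : HasDerivAt (fun u : ℝ => s u - c * u) (deriv s u - c * 1) u :=
        (hdiff u).hasDerivAt.sub ((hasDerivAt_id u).const_mul c)
      rw [hder2.deriv]
      have := key u hu.1.le (hno u hu.1.le)
      linarith
    have h1 : s 0 - c * 0 ≤ s T - c * T :=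
      hmono (Set.left_mem_Icc.mpr hTpos.le) (Set.right_mem_Icc.mpr hTpos.le) hTpos.le
    have hcT : c * T = sin + 1 := by
      rw [hT]; field_simp
    have hs0 := (hrange 0 le_rfl).1
    have hsT := (hrange T hTpos.le).2
    simp only [mul_zero, sub_zero] at h1
    linarith
end

section
/- Let s, q : [0,∞) → ℝ be differentiable with q'(t) = g(s(t)) - h(q(t)), where g, h are continuous strictly increasing functions with h invertible on the range of g and Q := h⁻¹ ∘ g. Suppose |s'(t)| ≤ B for some B > 0 and s does not converge to s₀ as t → ∞, in the sense that there is η > 0 with |s(t) - s₀| > η for arbitrarily large t. Then q does not converge to Q(s₀) as t → ∞. -/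
theorem nonconvergence_transfer (g h Q : ℝ → ℝ) (s q : ℝ → ℝ) (B s₀ : ℝ)
    (hgcont : Continuous g) (hgmono : StrictMono g)
    (hhcont : Continuous h) (hhmono : StrictMono h)
    (hQ : ∀ x, h (Q x) = g x)
    (hsdiff : Differentiable ℝ s) (hqdiff : Differentiable ℝ q)
    (hode : ∀ t, deriv q t = g (s t) - h (q t))
    (hB : 0 < B) (hbound : ∀ t, |deriv s t| ≤ B)
    (hnc : ∃ η > (0:ℝ), ∀ T : ℝ, ∃ t ≥ T, |s t - s₀| > η) :
    ¬ Filter.Tendsto q Filter.atTop (nhds (Q s₀)) := by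
  obtain ⟨η, hη, hfar⟩ := hnc
  intro hq
  set L := η / (2 * B) with hLdef
  have hL : 0 < L := div_pos hη (by linarith)
  have hBL : B * L = η / 2 := by
    field_simp [hLdef]
    rw [hLdef]; field_simp [hB.ne']
  set δ := min (g (s₀ + η/2) - g s₀) (g s₀ - g (s₀ - η/2)) with hδdef
  have hδ : 0 < δ := lt_min
    (by have := hgmono (show s₀ < s₀ + η/2 by linarith); linarith)
    (by have := hgmono (show s₀ - η/2 < s₀ by linarith); linarith)
  -- h ∘ q tends to g s₀
  have hhq : Filter.Tendsto (fun t => h (q t)) Filter.atTop (nhds (g s₀)) := by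
    have := (hhcont.tendsto (Q s₀)).comp hq
    rwa [hQ] at this
  obtain ⟨T₁, hT₁⟩ := (Metric.tendsto_atTop.1 hhq) (δ/2) (by linarith)
  obtain ⟨T₂, hT₂⟩ := (Metric.tendsto_atTop.1 hq) (δ * L / 8) (by positivity)
  obtain ⟨t, ht, hts⟩ := hfar (max T₁ T₂)
  have htT₁ : T₁ ≤ t := le_trans (le_max_left _ _) ht
  have htT₂ : T₂ ≤ t := le_trans (le_max_right _ _) ht
  -- s is B-Lipschitz
  have hlip : ∀ x y : ℝ, |s y - s x| ≤ B * |y - x| := by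
    intro x y
    have := Convex.norm_image_sub_le_of_norm_deriv_le
      (f := s) (C := B) (s := Set.univ)
      (fun z _ => hsdiff z)
      (fun z _ => by simpa [Real.norm_eq_abs] using hbound z)
      convex_univ (Set.mem_univ x) (Set.mem_univ y)
    simpa [Real.norm_eq_abs] using this
  -- on the window, s stays far from s₀
  have hclose : ∀ τ ∈ Set.Icc t (t + L), η / 2 < |s τ - s₀| := by
    intro τ hτ
    have h1 : |s τ - s t| ≤ η / 2 := by
      have := hlip t τ
      have habs : |τ - t| ≤ L := by
        rw [abs_of_nonneg (by linarith [hτ.1])]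
        linarith [hτ.2]
      calc |s τ - s t| ≤ B * |τ - t| := this
        _ ≤ B * L := by nlinarith
        _ = η / 2 := hBL
    have := abs_sub_abs_le_abs_sub (s t - s₀) (s τ - s₀)
    have h2 : |s t - s₀ - (s τ - s₀)| = |s τ - s t| := by
      rw [← abs_neg]; ring_nf
    rw [h2] at this
    linarith
  -- MVT for q on the window
  obtain ⟨c, hc, hderiv⟩ := exists_hasDerivAt_eq_slope q (deriv q)
    (show t < t + L by linarith) (hqdiff.continuous.continuousOn)
    (fun x _ => (hqdiff x).hasDerivAt)
  have hcIcc : c ∈ Set.Icc t (t + L) := ⟨le_of_lt hc.1, le_of_lt hc.2⟩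
  have hhqc : |h (q c) - g s₀| < δ / 2 := by
    have := hT₁ c (le_trans htT₁ hcIcc.1)
    rwa [Real.dist_eq] at this
  have hqL : |q (t + L) - Q s₀| < δ * L / 8 := by
    have := hT₂ (t + L) (by linarith)
    rwa [Real.dist_eq] at this
  have hqt : |q t - Q s₀| < δ * L / 8 := by
    have := hT₂ t htT₂
    rwa [Real.dist_eq] at this
  have hslope : deriv q c = (q (t + L) - q t) / L := by
    rw [hderiv]; ring_nf
  have hqdiffsmall : |q (t + L) - q t| < δ * L / 4 := by
    have := abs_sub_abs_le_abs_sub (q (t+L) - Q s₀) (q t - Q s₀)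
    calc |q (t + L) - q t| = |(q (t+L) - Q s₀) - (q t - Q s₀)| := by ring_nf
      _ ≤ |q (t+L) - Q s₀| + |q t - Q s₀| := abs_sub _ _
      _ < δ * L / 4 := by linarith
  -- key derivative bound
  have hderivbig : δ / 2 ≤ |deriv q c| := by
    rcases abs_cases (s t - s₀) with ⟨he, _⟩ | ⟨he, _⟩
    · -- up case: s t > s₀ + η
      have hst : s₀ + η < s t := by rw [he] at hts; linarith
      have hsc : s₀ + η / 2 ≤ s c := by
        by_contra hlt
        push_neg at hlt
        have hmem : (s₀ + η/2) ∈ Set.Icc (s c) (s t) :=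
          ⟨le_of_lt hlt, by linarith⟩
        obtain ⟨x, hx, hsx⟩ := intermediate_value_Icc' hcIcc.1
          (hsdiff.continuous.continuousOn) hmem
        have hxIcc : x ∈ Set.Icc t (t + L) :=
          ⟨hx.1, le_trans hx.2 hcIcc.2⟩
        have := hclose x hxIcc
        rw [hsx] at this
        rw [abs_of_pos (by linarith)] at this
        linarith
      have hg : g s₀ + δ ≤ g (s c) := by
        have h1 : g (s₀ + η/2) ≤ g (s c) := hgmono.le_iff_le.2 hsc
        have h2 : δ ≤ g (s₀ + η/2) - g s₀ := min_le_left _ _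
        linarith
      have : δ / 2 ≤ deriv q c := by
        rw [hode]
        have := abs_lt.1 hhqc
        linarith [this.2]
      calc δ / 2 ≤ deriv q c := this
        _ ≤ |deriv q c| := le_abs_self _
    · -- down case: s t < s₀ - η
      have hst : s t < s₀ - η := by rw [he] at hts; linarith
      have hsc : s c ≤ s₀ - η / 2 := by
        by_contra hlt
        push_neg at hlt
        have hmem : (s₀ - η/2) ∈ Set.Icc (s t) (s c) :=
          ⟨by linarith, le_of_lt hlt⟩
        obtain ⟨x, hx, hsx⟩ := intermediate_value_Icc hcIcc.1
          (hsdiff.continuous.continuousOn) hmem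
        have hxIcc : x ∈ Set.Icc t (t + L) :=
          ⟨hx.1, le_trans hx.2 hcIcc.2⟩
        have := hclose x hxIcc
        rw [hsx] at this
        rw [abs_of_neg (by linarith)] at this
        linarith
      have hg : g (s c) ≤ g s₀ - δ := by
        have h1 : g (s c) ≤ g (s₀ - η/2) := hgmono.le_iff_le.2 hsc
        have h2 : δ ≤ g s₀ - g (s₀ - η/2) := min_le_right _ _
        linarith
      have hneg : deriv q c ≤ -(δ / 2) := by
        rw [hode]
        have := abs_lt.1 hhqc
        linarith [this.1]
      calc δ / 2 ≤ -(deriv q c) := by linarith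
        _ ≤ |deriv q c| := neg_le_abs _
  -- contradiction
  rw [hslope, abs_div, abs_of_pos hL] at hderivbig
  have hfin : δ / 2 * L ≤ |q (t + L) - q t| := (le_div_iff₀ hL).1 hderivbig
  nlinarith
end

section
/- Let n ≥ 1, and let a₁,…,aₙ > 0 and b₁,…,bₙ > 0 be real numbers. Consider the n×n real matrix J with entries J_{jl} = -aⱼ - bⱼ·δ_{jl} (i.e. J_{jj} = -aⱼ - bⱼ and J_{jl} = -aⱼ for l ≠ j). Then every (complex) eigenvalue λ of J is real and satisfies λ ≤ -min_j bⱼ < 0. -/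
theorem contois_jacobian_eigenvalues (n : ℕ) (hn : 0 < n) (a b : Fin n → ℝ)
    (ha : ∀ j, 0 < a j) (hb : ∀ j, 0 < b j)
    (J : Matrix (Fin n) (Fin n) ℂ)
    (hJ : ∀ j l, J j l = -(a j : ℂ) - (if j = l then (b j : ℂ) else 0))
    (μ : ℂ) (v : Fin n → ℂ) (hv : v ≠ 0)
    (heig : J.mulVec v = μ • v) :
    ∃ r : ℝ, μ = (r : ℂ) ∧
      r ≤ -(Finset.inf' Finset.univ ⟨⟨0, hn⟩, Finset.mem_univ _⟩ b) ∧ r < 0 := by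
  set m := Finset.inf' Finset.univ ⟨⟨0, hn⟩, Finset.mem_univ _⟩ b with hm
  have hmle : ∀ j, m ≤ b j := fun j => Finset.inf'_le _ (Finset.mem_univ j)
  have hmpos : 0 < m := by
    obtain ⟨j, _, hj⟩ := Finset.exists_mem_eq_inf' ⟨⟨0, hn⟩, Finset.mem_univ _⟩ b
    rw [hm, hj]; exact hb j
  set S : ℂ := ∑ l, v l with hS
  have key : ∀ j, (μ + b j) * v j = -(a j : ℂ) * S := by
    intro j
    have h := congrFun heig j
    simp only [Matrix.mulVec, dotProduct, Pi.smul_apply, smul_eq_mul] at h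
    have h2 : ∑ l, J j l * v l
        = ∑ l, (-(a j : ℂ) * v l - (if j = l then (b j : ℂ) * v l else 0)) := by
      apply Finset.sum_congr rfl; intro l _
      rw [hJ j l]
      by_cases hjl : j = l <;> simp [hjl] <;> ring
    rw [h2, Finset.sum_sub_distrib, ← Finset.mul_sum, Finset.sum_ite_eq,
      if_pos (Finset.mem_univ j)] at h
    rw [← hS] at h
    linear_combination -h
  by_cases hS0 : S = 0
  · -- some component nonzero gives μ = -b j
    obtain ⟨j, hj⟩ := Function.ne_iff.mp hv
    have h := key j
    rw [hS0, mul_zero] at h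
    have hμ : μ + b j = 0 := by
      rcases mul_eq_zero.mp h with h' | h'
      · exact h'
      · exact absurd h' hj
    refine ⟨-(b j), ?_, ?_, ?_⟩
    · push_cast
      linear_combination hμ
    · simp only [neg_le_neg_iff]
      exact hmle j
    · linarith [hb j]
  · have hne : ∀ j, μ + b j ≠ 0 := by
      intro j h0
      have h := key j
      rw [h0, zero_mul] at h
      rcases mul_eq_zero.mp h.symm with h' | h'
      · have : (a j : ℂ) = 0 := by linear_combination -h'
        exact absurd (by exact_mod_cast this) (ne_of_gt (ha j))
      · exact hS0 h'
    have hvj : ∀ j, v j = -(a j : ℂ) * S / (μ + b j) := by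
      intro j
      rw [eq_div_iff (hne j)]
      rw [mul_comm]; exact key j
    have hsum : ∑ j, (a j : ℂ) / (μ + b j) = -1 := by
      have h1 : S = -S * ∑ j, (a j : ℂ) / (μ + b j) := by
        calc S = ∑ j, v j := hS
        _ = ∑ j, -(a j : ℂ) * S / (μ + b j) := Finset.sum_congr rfl fun j _ => hvj j
        _ = ∑ j, -S * ((a j : ℂ) / (μ + b j)) := by
            apply Finset.sum_congr rfl; intro j _; ring
        _ = -S * ∑ j, (a j : ℂ) / (μ + b j) := by rw [Finset.mul_sum]
      have h2 : S * (1 + ∑ j, (a j : ℂ) / (μ + b j)) = 0 := by linear_combination h1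
      rcases mul_eq_zero.mp h2 with h' | h'
      · exact absurd h' hS0
      · linear_combination h'
    -- imaginary part
    have him : μ.im = 0 := by
      have h0 : (∑ j, (a j : ℂ) / (μ + b j)).im = 0 := by rw [hsum]; simp
      rw [Complex.im_sum] at h0
      have h1 : ∀ j, ((a j : ℂ) / (μ + b j)).im
          = -(μ.im * (a j / Complex.normSq (μ + b j))) := by
        intro j
        rw [Complex.div_im]
        simp [Complex.add_im, Complex.add_re, Complex.ofReal_im, Complex.ofReal_re]
        ring
      rw [Finset.sum_congr rfl fun j _ => h1 j] at h0
      rw [Finset.sum_neg_distrib, neg_eq_zero, ← Finset.mul_sum] at h0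
      have hP : 0 < ∑ j, a j / Complex.normSq (μ + b j) := by
        apply Finset.sum_pos
        · intro j _
          apply div_pos (ha j)
          exact Complex.normSq_pos.mpr (hne j)
        · exact ⟨⟨0, hn⟩, Finset.mem_univ _⟩
      rcases mul_eq_zero.mp h0 with h' | h'
      · exact h'
      · exact absurd h' (ne_of_gt hP)
    refine ⟨μ.re, ?_, ?_, ?_⟩
    · exact (Complex.ext (by simp) (by simp [him])).symm
    all_goals {
      have hμ : μ = (μ.re : ℂ) := Complex.ext (by simp) (by simp [him])
      have hrne : ∀ j, μ.re + b j ≠ 0 := by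
        intro j h0
        apply hne j
        rw [hμ]
        exact_mod_cast congrArg (fun x : ℝ => (x : ℂ)) h0
      have hr : ∑ j, a j / (μ.re + b j) = -1 := by
        have h := hsum
        rw [hμ] at h
        have : ((∑ j, a j / (μ.re + b j) : ℝ) : ℂ) = ((-1 : ℝ) : ℂ) := by
          push_cast
          convert h using 2
        exact_mod_cast this
      have hle : μ.re ≤ -m := by
        by_contra hgt
        push_neg at hgt
        have hpos : ∀ j, 0 < μ.re + b j := by
          intro j
          have := hmle j
          linarith
        have : 0 < ∑ j, a j / (μ.re + b j) := by
          apply Finset.sum_pos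
          · intro j _; exact div_pos (ha j) (hpos j)
          · exact ⟨⟨0, hn⟩, Finset.mem_univ _⟩
        linarith
      first
        | exact hle
        | linarith
    }
end

section
/- Let n ≥ 1, a₀, a₁,…,aₙ > 0 and b₁,…,bₙ > 0 be real numbers. Consider the (n+1)×(n+1) real matrix J indexed by {0,1,…,n} with J_{0l} = -a₀ for all l, J_{j0} = -aⱼ, J_{jj} = -aⱼ - bⱼ, and J_{jl} = -aⱼ for 1 ≤ j ≤ n, l ≠ j. Then every complex eigenvalue of J is real and negative. -/
theorem mixed_jacobian_eigenvalues (n : ℕ) (hn : 1 ≤ n)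
    (a b : Fin (n + 1) → ℝ)
    (ha : ∀ j, 0 < a j) (hb : ∀ j, j ≠ 0 → 0 < b j)
    (J : Matrix (Fin (n + 1)) (Fin (n + 1)) ℂ)
    (hJ : ∀ j l, J j l = -(a j : ℂ) - (if j = l ∧ j ≠ 0 then (b j : ℂ) else 0))
    (μ : ℂ) (v : Fin (n + 1) → ℂ) (hv : v ≠ 0)
    (heig : J.mulVec v = μ • v) :
    ∃ r : ℝ, μ = (r : ℂ) ∧ r < 0 := by
  classical
  set B : Fin (n+1) → ℝ := fun j => if j = 0 then 0 else b j with hB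
  have hBnn : ∀ j, 0 ≤ B j := by
    intro j
    by_cases h : j = 0 <;> simp [hB, h]
    exact (hb j h).le
  set S : ℂ := ∑ l, v l with hS
  have key : ∀ j, (μ + (B j : ℂ)) * v j = -(a j : ℂ) * S := by
    intro j
    have h := congrFun heig j
    have hrow : ∀ l, J j l = -(a j : ℂ) - (if j = l then (B j : ℂ) else 0) := by
      intro l
      rw [hJ]
      by_cases h1 : j = l
      · subst h1
        by_cases h2 : j = 0 <;> simp [hB, h2]
      · simp [h1]
    simp only [Matrix.mulVec, dotProduct, Pi.smul_apply, smul_eq_mul] at h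
    have hexp : ∑ l, J j l * v l = -(a j : ℂ) * S - (B j : ℂ) * v j := by
      calc ∑ l, J j l * v l
          = ∑ l, ((-(a j : ℂ)) * v l - (if j = l then (B j : ℂ) * v l else 0)) := by
            apply Finset.sum_congr rfl
            intro l _
            rw [hrow l]
            by_cases h1 : j = l <;> simp [h1] <;> ring
        _ = (∑ l, (-(a j : ℂ)) * v l) - ∑ l, (if j = l then (B j : ℂ) * v l else 0) :=
            Finset.sum_sub_distrib _ _
        _ = -(a j : ℂ) * S - (B j : ℂ) * v j := by
            rw [← Finset.mul_sum, Finset.sum_ite_eq]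
            simp [hS]
    rw [hexp] at h
    linear_combination -h
  by_cases hS0 : S = 0
  · -- sum of components is zero
    obtain ⟨j, hj⟩ := Function.ne_iff.mp hv
    have hkj := key j
    rw [hS0, mul_zero] at hkj
    have hμB : μ + (B j : ℂ) = 0 := by
      rcases mul_eq_zero.mp hkj with h | h
      · exact h
      · exact absurd h hj
    by_cases hj0 : j = 0
    · exfalso
      have hμ0 : μ = 0 := by
        have : B j = 0 := by simp [hB, hj0]
        rw [this] at hμB; simpa using hμB
      have hvk : ∀ k, k ≠ 0 → v k = 0 := by
        intro k hk0
        have hkk := key k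
        rw [hS0, mul_zero, hμ0, zero_add] at hkk
        rcases mul_eq_zero.mp hkk with h | h
        · exact absurd h (by
            simp only [hB]
            rw [if_neg hk0]
            exact_mod_cast (hb k hk0).ne')
        · exact h
      have hSv0 : S = v 0 := by
        rw [hS]
        rw [Finset.sum_eq_single 0]
        · intro k _ hk; exact hvk k hk
        · intro h; exact absurd (Finset.mem_univ 0) h
      rw [hj0] at hj
      rw [hS0] at hSv0
      exact hj hSv0.symm
    · refine ⟨-(b j), ?_, ?_⟩
      · have : (B j : ℂ) = (b j : ℂ) := by simp [hB, hj0]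
        rw [this] at hμB
        push_cast
        linear_combination hμB
      · simpa using (hb j hj0)
  · -- S ≠ 0
    have hne : ∀ j, μ + (B j : ℂ) ≠ 0 := by
      intro j h
      have hkj := key j
      rw [h, zero_mul] at hkj
      exact (mul_ne_zero (neg_ne_zero.mpr (Complex.ofReal_ne_zero.mpr (ha j).ne')) hS0) hkj.symm
    have hvj : ∀ j, v j = -(a j : ℂ) * S / (μ + (B j : ℂ)) := by
      intro j
      rw [eq_div_iff (hne j)]
      linear_combination key j
    have hsum : ∑ j, (a j : ℂ) / (μ + (B j : ℂ)) = -1 := by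
      have h1 : S * 1 = S * (-∑ j, (a j : ℂ) / (μ + (B j : ℂ))) := by
        calc S * 1 = ∑ l, v l := by rw [mul_one, hS]
          _ = ∑ l, S * (-(((a l : ℂ)) / (μ + (B l : ℂ)))) := by
              apply Finset.sum_congr rfl
              intro l _
              rw [hvj l]; ring
          _ = S * ∑ l, (-(((a l : ℂ)) / (μ + (B l : ℂ)))) := (Finset.mul_sum _ _ _).symm
          _ = S * (-∑ l, ((a l : ℂ)) / (μ + (B l : ℂ))) := by rw [← Finset.sum_neg_distrib]
      have h2 := mul_left_cancel₀ hS0 h1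
      linear_combination h2
    have him : μ.im = 0 := by
      by_contra h
      have himsum : (∑ j, (a j : ℂ) / (μ + (B j : ℂ))).im = 0 := by rw [hsum]; simp
      rw [Complex.im_sum] at himsum
      have hterm : ∀ j, ((a j : ℂ) / (μ + (B j : ℂ))).im
          = -(μ.im) * (a j / Complex.normSq (μ + (B j : ℂ))) := by
        intro j
        rw [Complex.div_im]
        simp [Complex.add_im, Complex.add_re]
        ring
      rw [Finset.sum_congr rfl (fun j _ => hterm j), ← Finset.mul_sum] at himsum
      have hpos : 0 < ∑ j, a j / Complex.normSq (μ + (B j : ℂ)) := by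
        apply Finset.sum_pos
        · intro j _
          exact div_pos (ha j) (Complex.normSq_pos.mpr (hne j))
        · exact Finset.univ_nonempty
      rcases mul_eq_zero.mp himsum with h' | h'
      · exact h (by linarith [neg_eq_zero.mp h'])
      · exact absurd h' hpos.ne'
    have hμr : μ = ((μ.re : ℝ) : ℂ) := by
      apply Complex.ext
      · simp
      · simp [him]
    refine ⟨μ.re, hμr, ?_⟩
    have hrne : ∀ j, μ.re + B j ≠ 0 := by
      intro j h
      apply hne j
      rw [hμr]
      rw [← Complex.ofReal_add, h, Complex.ofReal_zero]
    have hreal : ∑ j, a j / (μ.re + B j) = -1 := by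
      have hc : ((∑ j, a j / (μ.re + B j) : ℝ) : ℂ) = ((-1 : ℝ) : ℂ) := by
        push_cast
        rw [← hsum]
        apply Finset.sum_congr rfl
        intro j _
        rw [hμr]
        push_cast
        simp
      exact_mod_cast hc
    by_contra hr
    push_neg at hr
    have : 0 < ∑ j, a j / (μ.re + B j) := by
      apply Finset.sum_pos
      · intro j _
        apply div_pos (ha j)
        rcases lt_or_eq_of_le (by linarith [hBnn j] : (0:ℝ) ≤ μ.re + B j) with h | h
        · exact h
        · exact absurd h.symm (hrne j)
      · exact Finset.univ_nonempty
    linarith [hreal]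
end

section
/- Let q : [0,∞) → ℝ be differentiable with q'(t) ≤ ρᵐ for all t (ρᵐ > 0), and suppose there exist Q₀, θ > 0 and a sequence of times tₙ → ∞ with q(tₙ) ≥ Q₀ + θ and q(t) ≥ Q₀ for all t ≥ t_L. Let z : [0,∞) → ℝ be differentiable with z(t_L) > 0, z'(t) ≥ 0 whenever q(t) ≥ Q₀, and z'(t) ≥ C·z(t) with C > 0 whenever q(t) ≥ Q₀ + θ/2. Then z(t) → ∞ as t → ∞. -/
theorem biomass_divergence (q z : ℝ → ℝ) (ρm Q0 θ tL C : ℝ)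
    (hρm : 0 < ρm) (hθ : 0 < θ) (hC : 0 < C)
    (hqdiff : Differentiable ℝ q) (hzdiff : Differentiable ℝ z)
    (hqder : ∀ t, deriv q t ≤ ρm)
    (tn : ℕ → ℝ) (htn : Filter.Tendsto tn Filter.atTop Filter.atTop)
    (hqtn : ∀ n, q (tn n) ≥ Q0 + θ)
    (hqlow : ∀ t ≥ tL, q t ≥ Q0)
    (hzL : 0 < z tL)
    (hz1 : ∀ t, q t ≥ Q0 → deriv z t ≥ 0)
    (hz2 : ∀ t, q t ≥ Q0 + θ / 2 → deriv z t ≥ C * z t) :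
    Filter.Tendsto z Filter.atTop Filter.atTop := by
  set δ : ℝ := θ / (2 * ρm) with hδdef
  have hδ : 0 < δ := div_pos hθ (by linarith)
  have hρδ : ρm * δ = θ / 2 := by
    rw [hδdef]; field_simp
  -- Step A: near an excursion time, q stays above Q0 + θ/2
  have hA : ∀ s t : ℝ, s - δ ≤ t → t ≤ s → q s ≥ Q0 + θ → q t ≥ Q0 + θ / 2 := by
    intro s t h1 h2 hs
    have hmono : Monotone (fun u => ρm * u - q u) := by
      apply monotone_of_deriv_nonneg
      · exact (differentiable_id.const_mul ρm).sub hqdiff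
      · intro x
        have hd : deriv (fun u => ρm * u - q u) x = ρm * 1 - deriv q x :=
          (((hasDerivAt_id x).const_mul ρm).sub (hqdiff x).hasDerivAt).deriv
        rw [hd]; linarith [hqder x]
    have h3 := hmono h2
    simp only at h3
    have h4 : ρm * (s - t) ≤ ρm * δ :=
      mul_le_mul_of_nonneg_left (by linarith) hρm.le
    nlinarith
  -- Step B: z is monotone on [tL, ∞)
  have hB : MonotoneOn z (Set.Ici tL) := by
    apply monotoneOn_of_deriv_nonneg (convex_Ici tL)
      hzdiff.continuous.continuousOn hzdiff.differentiableOn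
    intro x hx
    rw [interior_Ici] at hx
    exact hz1 x (hqlow x (le_of_lt hx))
  -- Step C: growth across each excursion
  have hC2 : ∀ s : ℝ, tL + δ ≤ s → q s ≥ Q0 + θ →
      z (s - δ) + C * z tL * δ ≤ z s := by
    intro s hs hqs
    have hg : MonotoneOn (fun t => z t - (C * z tL) * t) (Set.Icc (s - δ) s) := by
      apply monotoneOn_of_deriv_nonneg (convex_Icc _ _)
      · exact (hzdiff.sub (differentiable_id.const_mul _)).continuous.continuousOn
      · exact (hzdiff.sub (differentiable_id.const_mul _)).differentiableOn
      · intro x hx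
        rw [interior_Icc] at hx
        have hqx : q x ≥ Q0 + θ / 2 := hA s x (le_of_lt hx.1) (le_of_lt hx.2) hqs
        have hd : deriv (fun t => z t - C * z tL * t) x = deriv z x - C * z tL * 1 :=
          ((hzdiff x).hasDerivAt.sub ((hasDerivAt_id x).const_mul (C * z tL))).deriv
        rw [hd]
        have h2 := hz2 x hqx
        have h3 : z tL ≤ z x :=
          hB Set.self_mem_Ici (Set.mem_Ici.mpr (by linarith [hx.1])) (by linarith [hx.1])
        nlinarith
    have h4 := hg (Set.mem_Icc.mpr ⟨le_refl _, by linarith⟩)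
      (Set.mem_Icc.mpr ⟨by linarith, le_refl s⟩) (by linarith)
    simp only at h4
    nlinarith
  -- existence of excursion times beyond any bound
  have key : ∀ B : ℝ, ∃ s, B ≤ s ∧ q s ≥ Q0 + θ := by
    intro B
    obtain ⟨N, hN⟩ := (Filter.tendsto_atTop.mp htn B).exists
    exact ⟨tn N, hN, hqtn N⟩
  -- main induction: z gets arbitrarily large
  have main : ∀ k : ℕ, ∃ s, tL + δ ≤ s ∧ z tL + (k + 1 : ℝ) * (C * z tL * δ) ≤ z s := by
    intro k
    induction k with
    | zero =>
      obtain ⟨s, hs1, hs2⟩ := key (tL + δ)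
      refine ⟨s, hs1, ?_⟩
      have h1 := hC2 s hs1 hs2
      have h2 : z tL ≤ z (s - δ) :=
        hB Set.self_mem_Ici (Set.mem_Ici.mpr (by linarith)) (by linarith)
      push_cast
      nlinarith
    | succ k ih =>
      obtain ⟨s, hs1, hs2⟩ := ih
      obtain ⟨s', hs'1, hs'2⟩ := key (s + δ)
      refine ⟨s', by linarith, ?_⟩
      have h1 := hC2 s' (by linarith) hs'2
      have h2 : z s ≤ z (s' - δ) :=
        hB (Set.mem_Ici.mpr (by linarith)) (Set.mem_Ici.mpr (by linarith)) (by linarith)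
      push_cast at hs2 ⊢
      nlinarith
  rw [Filter.tendsto_atTop]
  intro M
  have hCzδ : 0 < C * z tL * δ := mul_pos (mul_pos hC hzL) hδ
  obtain ⟨k, hk⟩ := exists_nat_gt ((M - z tL) / (C * z tL * δ))
  have hk' : M ≤ z tL + (k + 1 : ℝ) * (C * z tL * δ) := by
    rw [div_lt_iff₀ hCzδ] at hk
    nlinarith
  obtain ⟨s, hs1, hs2⟩ := main k
  filter_upwards [Filter.eventually_ge_atTop s] with t ht
  have h5 : z s ≤ z t :=
    hB (Set.mem_Ici.mpr (by linarith)) (Set.mem_Ici.mpr (by linarith)) ht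
  linarith
end
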